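/- arXiv:2511.10884 — 2 statements merged into one kernel-verified Lean document; each statement's English description precedes it below -/
import Mathlib

section
/- Let H be a Hilbert space, φ : H → ℝ Fréchet differentiable and λ-convex, and suppose X_{n+1} satisfies X_{n+1} = X_n − (τ/2)(∇φ(X_{n+1}) + ∇φ(X_n)) with τ > 0. Then for any ξ ∈ H: ⟨∇φ(X_n), ξ − X_{n+1}⟩ ≤ φ(ξ) − φ(X_{n+1}) + (τ/2)(‖∇φ(X_n)‖² − ‖∇φ(X_{n+1})‖²) − (λ/2)‖X_n − X_{n+1}‖² − (λ/2)‖ξ − X_n‖². -/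
open RealInnerProductSpace

section aux

variable {H : Type*} [NormedAddCommGroup H] [InnerProductSpace ℝ H] [CompleteSpace H]

lemma tangent_ineq (lam : ℝ) (φ : H → ℝ) (g : H → H)
    (hg : ∀ x, HasGradientAt φ (g x) x)
    (hconv : ∀ x y : H, ∀ t ∈ Set.Icc (0:ℝ) 1,
      φ ((1 - t) • x + t • y) ≤
        (1 - t) * φ x + t * φ y - (lam / 2) * t * (1 - t) * ‖x - y‖ ^ 2)
    (x y : H) :
    φ x + ⟪g x, y - x⟫ + (lam / 2) * ‖x - y‖ ^ 2 ≤ φ y := by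
  set F : ℝ → ℝ := fun t => φ (x + t • (y - x)) with hF
  have hline : HasDerivAt (fun t : ℝ => x + t • (y - x)) (y - x) 0 := by
    simpa using ((hasDerivAt_id (0:ℝ)).smul_const (y - x)).const_add x
  have hfd : HasFDerivAt φ (InnerProductSpace.toDual ℝ H (g x)) x :=
    (hasGradientAt_iff_hasFDerivAt).1 (hg x)
  have hd : HasDerivAt F ⟪g x, y - x⟫ 0 := by
    have h0 : x = x + (0:ℝ) • (y - x) := by simp
    rw [h0] at hfd
    have := hfd.comp_hasDerivAt 0 hline
    simpa [F, InnerProductSpace.toDual_apply_apply, Function.comp_def] using this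
  have hslope : Filter.Tendsto (fun t : ℝ => (F t - F 0) / t) (nhdsWithin 0 (Set.Ioi 0))
      (nhds ⟪g x, y - x⟫) := by
    have := (hasDerivAt_iff_tendsto_slope.mp hd).mono_left
      (nhdsWithin_mono 0 (fun t ht => ne_of_gt ht : Set.Ioi (0:ℝ) ⊆ {0}ᶜ))
    simpa [slope_def_field, Function.comp] using this.congr (fun t => by
      simp [slope, F]; ring_nf)
  have hR : Filter.Tendsto (fun t : ℝ => φ y - φ x - (lam / 2) * (1 - t) * ‖x - y‖ ^ 2)
      (nhdsWithin 0 (Set.Ioi 0)) (nhds (φ y - φ x - (lam / 2) * ‖x - y‖ ^ 2)) := by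
    have hc : Continuous fun t : ℝ => φ y - φ x - (lam / 2) * (1 - t) * ‖x - y‖ ^ 2 := by
      continuity
    have := (hc.tendsto 0).mono_left (nhdsWithin_le_nhds (s := Set.Ioi (0:ℝ)))
    simpa using this
  have hle : ∀ᶠ t in nhdsWithin (0:ℝ) (Set.Ioi 0),
      (F t - F 0) / t ≤ φ y - φ x - (lam / 2) * (1 - t) * ‖x - y‖ ^ 2 := by
    filter_upwards [Ioo_mem_nhdsGT_of_mem (Set.left_mem_Ico.2 one_pos)] with t ht
    have ht0 : 0 < t := ht.1
    have ht1 : t < 1 := ht.2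
    have hc := hconv x y t ⟨le_of_lt ht0, le_of_lt ht1⟩
    have key : x + t • (y - x) = (1 - t) • x + t • y := by module
    have hFt : F t = φ ((1 - t) • x + t • y) := by simp only [F, key]
    have hF0 : F 0 = φ x := by simp [F]
    rw [hFt, hF0, div_le_iff₀ ht0]
    nlinarith [hc]
  have := le_of_tendsto_of_tendsto hslope hR hle
  linarith [this]

end aux

theorem EVI_helper
    {H : Type*} [NormedAddCommGroup H] [InnerProductSpace ℝ H] [CompleteSpace H]
    (lam τ : ℝ) (hτ : 0 < τ)
    (φ : H → ℝ) (g : H → H) (hg : ∀ x, HasGradientAt φ (g x) x)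
    (hconv : ∀ x y : H, ∀ t ∈ Set.Icc (0:ℝ) 1,
      φ ((1 - t) • x + t • y) ≤
        (1 - t) * φ x + t * φ y - (lam / 2) * t * (1 - t) * ‖x - y‖ ^ 2)
    (X₀ X₁ : H)
    (himp : X₁ = X₀ - (τ / 2) • (g X₁ + g X₀)) :
    ∀ ξ : H,
      ⟪g X₀, ξ - X₁⟫ ≤
        φ ξ - φ X₁ + (τ / 2) * (‖g X₀‖ ^ 2 - ‖g X₁‖ ^ 2) -
          (lam / 2) * ‖X₀ - X₁‖ ^ 2 - (lam / 2) * ‖ξ - X₀‖ ^ 2 := by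
  intro ξ
  have hdiff : X₀ - X₁ = (τ / 2) • (g X₁ + g X₀) := by
    nth_rewrite 1 [himp]; abel
  have t1 := tangent_ineq lam φ g hg hconv X₀ ξ
  have t2 := tangent_ineq lam φ g hg hconv X₁ X₀
  have hsplit : ⟪g X₀, ξ - X₁⟫ = ⟪g X₀, ξ - X₀⟫ + ⟪g X₀, X₀ - X₁⟫ := by
    rw [← inner_add_right]; congr 1; abel
  have h1 : ⟪g X₀, X₀ - X₁⟫ = (τ / 2) * (⟪g X₀, g X₁⟫ + ‖g X₀‖ ^ 2) := by
    rw [hdiff, inner_smul_right, inner_add_right, real_inner_self_eq_norm_sq]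
  have h2 : ⟪g X₁, X₀ - X₁⟫ = (τ / 2) * (‖g X₁‖ ^ 2 + ⟪g X₁, g X₀⟫) := by
    rw [hdiff, inner_smul_right, inner_add_right, real_inner_self_eq_norm_sq]
  have hnormsym : ‖X₁ - X₀‖ = ‖X₀ - X₁‖ := norm_sub_rev _ _
  have hsym : ⟪g X₀, g X₁⟫ = ⟪g X₁, g X₀⟫ := real_inner_comm _ _
  rw [hsplit, h1]
  rw [norm_sub_rev X₀ ξ] at t1
  rw [h2, hnormsym] at t2
  rw [hsym]
  linarith [t1, t2]
end

section
/- Under the hypotheses of the previous statement (λ ≥ 0, ∇φ L-Lipschitz, 0 < τ ≤ 1/L, trapezoidal step X_{n+1} = X_n − (τ/2)(∇φ(X_{n+1}) + ∇φ(X_n)) arising as minimizer of the trapezoidal variational problem), the gradient norm decays geometrically: (1 + λτ(2 − Lτ))‖∇φ(X_{n+1})‖² ≤ ‖∇φ(X_n)‖². -/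
open RealInnerProductSpace

lemma arith_aux1 (s B P : ℝ) (hs0 : 0 < s) (hs : s ≤ 1) (hB : 0 ≤ B) (hP : 0 ≤ P)
    (h : 4 * B ≤ (1 + s ^ 2 / 4) * P) : (2 - s) * B ≤ P / 2 := by
  nlinarith [h, mul_nonneg hs0.le hB, mul_nonneg (mul_nonneg hs0.le hs0.le) hB,
    mul_nonneg (mul_nonneg (mul_nonneg hs0.le hs0.le) hs0.le) hB, mul_nonneg hs0.le hP,
    mul_nonneg (mul_nonneg hs0.le hs0.le) hP]

lemma arith_aux2 (lam τ L A B P : ℝ) (hlam : 0 ≤ lam) (hτ : 0 ≤ τ)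
    (key2 : lam * (τ / 2) * P ≤ A - B) (hP2 : (2 - L * τ) * B ≤ P / 2) :
    (1 + lam * τ * (2 - L * τ)) * B ≤ A := by
  have h := mul_le_mul_of_nonneg_left hP2 (mul_nonneg hlam hτ)
  nlinarith [h, key2]

lemma grad_lower_aux
    {H : Type*} [NormedAddCommGroup H] [InnerProductSpace ℝ H] [CompleteSpace H]
    (lam : ℝ) (φ : H → ℝ) (gx : H) (x y : H)
    (hgx : HasGradientAt φ gx x)
    (hconv : ∀ t ∈ Set.Icc (0:ℝ) 1,
      φ ((1 - t) • x + t • y) ≤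
        (1 - t) * φ x + t * φ y - (lam / 2) * t * (1 - t) * ‖x - y‖ ^ 2) :
    ⟪gx, y - x⟫ ≤ φ y - φ x - lam / 2 * ‖x - y‖ ^ 2 := by
  set c : ℝ → ℝ := fun t => φ (x + t • (y - x)) with hc
  have hline : ∀ t : ℝ, (1 - t) • x + t • y = x + t • (y - x) := by
    intro t; rw [sub_smul, one_smul, smul_sub]; abel
  have hd : HasDerivAt (fun t : ℝ => x + t • (y - x)) (y - x) 0 := by
    simpa using ((hasDerivAt_id (0:ℝ)).smul_const (y - x)).const_add x
  have hcd : HasDerivAt c ⟪gx, y - x⟫ 0 := by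
    have hx : x + (0:ℝ) • (y - x) = x := by simp
    have hF : HasFDerivAt φ ((InnerProductSpace.toDual ℝ H) gx) (x + (0:ℝ) • (y - x)) := by
      rw [hx]; exact hgx.hasFDerivAt
    have h := hF.comp_hasDerivAt 0 hd
    simp at h
    exact h
  have hslope : Filter.Tendsto (slope c 0) (nhdsWithin 0 (Set.Ioi 0)) (nhds ⟪gx, y - x⟫) :=
    (hasDerivAt_iff_tendsto_slope.mp hcd).mono_left
      (nhdsWithin_mono 0 (fun t ht => ne_of_gt ht))
  have hcont : Continuous (fun t : ℝ => (φ y - φ x) - lam / 2 * (1 - t) * ‖x - y‖ ^ 2) := by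
    fun_prop
  have hr : Filter.Tendsto (fun t : ℝ => (φ y - φ x) - lam / 2 * (1 - t) * ‖x - y‖ ^ 2)
      (nhdsWithin 0 (Set.Ioi 0)) (nhds ((φ y - φ x) - lam / 2 * ‖x - y‖ ^ 2)) := by
    have := (hcont.tendsto 0).mono_left (nhdsWithin_le_nhds (s := Set.Ioi (0:ℝ)))
    simpa using this
  have hev : ∀ᶠ t in nhdsWithin 0 (Set.Ioi 0),
      slope c 0 t ≤ (φ y - φ x) - lam / 2 * (1 - t) * ‖x - y‖ ^ 2 := by
    filter_upwards [Ioc_mem_nhdsGT_of_mem (Set.left_mem_Ico.mpr one_pos)] with t ht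
    have ht0 : 0 < t := ht.1
    have h1 := hconv t ⟨le_of_lt ht0, ht.2⟩
    rw [hline t] at h1
    have hc0 : c 0 = φ x := by simp [hc]
    have hct : c t = φ (x + t • (y - x)) := rfl
    rw [slope_def_field, sub_zero, div_le_iff₀ ht0, hc0]
    nlinarith [h1, hct]
  exact le_of_tendsto_of_tendsto hslope hr hev

theorem trapezoid_gradient_geometric_decay
    {H : Type*} [NormedAddCommGroup H] [InnerProductSpace ℝ H] [CompleteSpace H]
    (lam τ L : ℝ) (hlam : 0 ≤ lam) (hL : 0 < L) (hτ : 0 < τ) (hτL : τ ≤ 1 / L)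
    (φ : H → ℝ) (g : H → H) (hg : ∀ x, HasGradientAt φ (g x) x)
    (hconv : ∀ x y : H, ∀ t ∈ Set.Icc (0:ℝ) 1,
      φ ((1 - t) • x + t • y) ≤
        (1 - t) * φ x + t * φ y - (lam / 2) * t * (1 - t) * ‖x - y‖ ^ 2)
    (hLip : ∀ x y : H, ‖g x - g y‖ ≤ L * ‖x - y‖)
    (X₀ X₁ : H)
    (hmin : ∀ ξ : H,
      (1 / 2) * (φ X₁ + ⟪g X₀, X₁⟫) + (1 / (2 * τ)) * ‖X₁ - X₀‖ ^ 2 ≤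
      (1 / 2) * (φ ξ + ⟪g X₀, ξ⟫) + (1 / (2 * τ)) * ‖ξ - X₀‖ ^ 2)
    (himp : X₁ = X₀ - (τ / 2) • (g X₁ + g X₀)) :
    (1 + lam * τ * (2 - L * τ)) * ‖g X₁‖ ^ 2 ≤ ‖g X₀‖ ^ 2 := by
  set a := g X₀ with ha
  set b := g X₁ with hb
  have m1 := grad_lower_aux lam φ a X₀ X₁ (hg X₀) (hconv X₀ X₁)
  have m2 := grad_lower_aux lam φ b X₁ X₀ (hg X₁) (hconv X₁ X₀)
  rw [norm_sub_rev] at m2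
  have mono : lam * ‖X₀ - X₁‖ ^ 2 ≤ ⟪a - b, X₀ - X₁⟫ := by
    have h0 : ⟪a, X₁ - X₀⟫ + ⟪b, X₀ - X₁⟫ + lam * ‖X₀ - X₁‖ ^ 2 ≤ 0 := by linarith
    rw [inner_sub_left]
    have h1 : ⟪a, X₁ - X₀⟫ = -⟪a, X₀ - X₁⟫ := by
      rw [← inner_neg_right]; congr 1; abel
    rw [h1] at h0
    linarith
  have hd : X₀ - X₁ = (τ / 2) • (b + a) := by rw [himp]; abel
  have hin : ⟪a - b, X₀ - X₁⟫ = (τ / 2) * (‖a‖ ^ 2 - ‖b‖ ^ 2) := by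
    rw [hd, real_inner_smul_right, inner_sub_left, inner_add_right, inner_add_right,
      real_inner_self_eq_norm_sq, real_inner_self_eq_norm_sq, real_inner_comm a b]
    ring
  have hnd : ‖X₀ - X₁‖ = (τ / 2) * ‖b + a‖ := by
    rw [hd, norm_smul, Real.norm_eq_abs, abs_of_pos (by linarith)]
  have hlip : ‖a - b‖ ≤ L * ((τ / 2) * ‖b + a‖) := by
    rw [← hnd]; exact hLip X₀ X₁
  have hlip2 : ‖a - b‖ ^ 2 ≤ (L * τ / 2) ^ 2 * ‖b + a‖ ^ 2 := by
    nlinarith [mul_self_le_mul_self (norm_nonneg (a - b)) hlip]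
  have hpar : ‖b + a‖ ^ 2 + ‖a - b‖ ^ 2 = 2 * ‖a‖ ^ 2 + 2 * ‖b‖ ^ 2 := by
    rw [norm_add_sq_real, norm_sub_sq_real, real_inner_comm b a]; ring
  have key : lam * (τ / 2) ^ 2 * ‖b + a‖ ^ 2 ≤ (τ / 2) * (‖a‖ ^ 2 - ‖b‖ ^ 2) := by
    have e : lam * ‖X₀ - X₁‖ ^ 2 = lam * (τ / 2) ^ 2 * ‖b + a‖ ^ 2 := by rw [hnd]; ring
    rw [← hin, ← e]; exact mono
  have h2 : (0:ℝ) < τ / 2 := by linarith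
  have hP : (0:ℝ) ≤ ‖b + a‖ ^ 2 := sq_nonneg _
  have hB : (0:ℝ) ≤ ‖b‖ ^ 2 := sq_nonneg _
  have key2 : lam * (τ / 2) * ‖b + a‖ ^ 2 ≤ ‖a‖ ^ 2 - ‖b‖ ^ 2 := by
    rw [← mul_le_mul_iff_right₀ h2]; linear_combination key
  have hs : L * τ ≤ 1 := by
    rw [le_div_iff₀ hL] at hτL; linarith [mul_comm τ L ▸ hτL]
  have hs0 : 0 < L * τ := mul_pos hL hτ
  have hAB : ‖b‖ ^ 2 ≤ ‖a‖ ^ 2 := by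
    have := mul_nonneg (mul_nonneg hlam h2.le) hP
    linarith
  have hPB : 4 * ‖b‖ ^ 2 ≤ (1 + (L * τ) ^ 2 / 4) * ‖b + a‖ ^ 2 := by
    nlinarith [hlip2, hpar, hAB]
  have hP2 : (2 - L * τ) * ‖b‖ ^ 2 ≤ ‖b + a‖ ^ 2 / 2 :=
    arith_aux1 (L * τ) (‖b‖ ^ 2) (‖b + a‖ ^ 2) hs0 hs hB hP hPB
  exact arith_aux2 lam τ L (‖a‖ ^ 2) (‖b‖ ^ 2) (‖b + a‖ ^ 2) hlam hτ.le key2 hP2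
end
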